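/- For every natural number n and complex number a with (2a+1)_k ≠ 0 for 0 ≤ k ≤ 2n+1 and 2a+1 ≠ 0, ∑_{k=0}^{2n+1} (-2n-1)_k (a)_k 2^k / ((2a+1)_k k!) = (3/2)_n / ((2a+1) (a+3/2)_n). -/

import Mathlib

open Finset

/-- The Pochhammer symbol (rising factorial) `(x)_k = x (x+1) ⋯ (x+k-1)`. -/
noncomputable def poch (x : ℂ) (k : ℕ) : ℂ := (ascPochhammer ℂ k).eval x


lemma poch_zero (x : ℂ) : poch x 0 = 1 := by simp [poch]

lemma poch_succ (x : ℂ) (k : ℕ) : poch x (k+1) = poch x k * (x + k) := by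
  simp [poch, ascPochhammer_succ_right]

lemma poch_one (x : ℂ) : poch x 1 = x := by
  rw [show (1:ℕ) = 0 + 1 from rfl, poch_succ, poch_zero]; simp

lemma poch_two (x : ℂ) : poch x 2 = x * (x+1) := by
  rw [show (2:ℕ) = 1 + 1 from rfl, poch_succ, poch_one]; push_cast; ring

lemma poch_succ_left (x : ℂ) (k : ℕ) : poch x (k+1) = x * poch (x+1) k := by
  simp [poch, ascPochhammer_succ_left, Polynomial.eval_comp]

lemma poch_prod (x : ℂ) (k : ℕ) : poch x k = ∏ i ∈ range k, (x + i) := by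
  induction k with
  | zero => simp [poch_zero]
  | succ k ih => rw [poch_succ, ih, prod_range_succ]

lemma poch_neg_nat (M k : ℕ) (h : M < k) : poch (-(M:ℂ)) k = 0 := by
  rw [poch_prod]
  exact prod_eq_zero (mem_range.mpr h) (by simp)

lemma poch_factor_ne (x : ℂ) (k : ℕ) (h : poch x k ≠ 0) : ∀ i < k, x + i ≠ 0 := by
  rw [poch_prod] at h
  intro i hi
  exact fun hz => h (prod_eq_zero (mem_range.mpr hi) hz)

lemma poch_down1 (x : ℂ) (k : ℕ) : poch (-(x+1)) (k+1) = -(x+1) * poch (-x) k := by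
  rw [poch_succ_left, show -(x+1)+1 = -x by ring]

lemma poch_down2 (x : ℂ) (k : ℕ) :
    poch (-(x+2)) (k+2) = (-(x+2)) * (-(x+1)) * poch (-x) k := by
  rw [poch_succ_left, show -(x+2)+1 = -(x+1) by ring, poch_down1, mul_assoc]

noncomputable def Tterm (a : ℂ) (M k : ℕ) : ℂ :=
  poch (-(M:ℂ)) k * poch a k * 2^k / (poch (2*a+1) k * (k.factorial : ℂ))

noncomputable def Ssum (a : ℂ) (M : ℕ) : ℂ := ∑ k ∈ range (M+1), Tterm a M k

noncomputable def wfn (a : ℂ) (m j : ℕ) : ℂ :=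
  -2*((m:ℂ)+1)*((j:ℂ)-(m:ℂ))*(a+(j:ℂ)+2) * poch (-(m:ℂ)) j * poch a (j+2) * 2^(j+2)
    / (poch (2*a+1) (j+2) * ((j+2).factorial : ℂ))

noncomputable def vfn (a : ℂ) (m k : ℕ) : ℂ :=
  if k = 0 then 0 else if k = 1 then 2*a else if k = 2 then -4*a*(a+1)*((m:ℂ)+1)/(2*a+1)
  else wfn a m (k-3)

lemma rec_step (a : ℂ) (m : ℕ) (H : ∀ k ≤ m+2, poch (2*a+1) k ≠ 0) :
    (2*a+(m:ℂ)+2) * Ssum a (m+2) = Ssum a (m+1) + ((m:ℂ)+1) * Ssum a m := by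
  have hT1 : Tterm a (m+1) (m+2) = 0 := by
    rw [Tterm, poch_neg_nat (m+1) (m+2) (by omega)]; simp
  have hT0 : ∀ k, m < k → Tterm a m k = 0 := by
    intro k hk
    rw [Tterm, poch_neg_nat m k hk]; simp
  have e1 : ∑ k ∈ range (m+3), Tterm a (m+1) k = Ssum a (m+1) := by
    rw [show m+3 = (m+2)+1 from rfl, sum_range_succ, hT1, add_zero]; rfl
  have e0 : ∑ k ∈ range (m+3), Tterm a m k = Ssum a m := by
    rw [show m+3 = (m+2)+1 from rfl, sum_range_succ, show m+2 = (m+1)+1 from rfl,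
      sum_range_succ, hT0 (m+2) (by omega), hT0 (m+1) (by omega), add_zero, add_zero]; rfl
  have key : ∑ k ∈ range (m+3),
      ((2*a+(m:ℂ)+2) * Tterm a (m+2) k - Tterm a (m+1) k - ((m:ℂ)+1) * Tterm a m k) = 0 := by
    have hv : ∀ k ∈ range (m+3),
        (2*a+(m:ℂ)+2) * Tterm a (m+2) k - Tterm a (m+1) k - ((m:ℂ)+1) * Tterm a m k
          = vfn a m (k+1) - vfn a m k := by
      intro k hk
      rw [mem_range] at hk
      match k with
      | 0 =>
        simp only [Tterm, vfn, poch_zero, pow_zero, Nat.factorial_zero]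
        norm_num
        ring
      | 1 =>
        have h1 : (2*a+1) ≠ 0 := by
          have := H 1 (by omega); rwa [poch_one] at this
        simp only [Tterm, vfn, poch_one, pow_one, Nat.factorial_one]
        norm_num
        push_cast
        field_simp
        ring
      | 2 =>
        have hp2 : poch (2*a+1) 2 ≠ 0 := H 2 (by omega)
        have h1 : (2*a+1) ≠ 0 := by
          have := poch_factor_ne _ _ hp2 0 (by omega); simpa using this
        have h2 : (2*a+1+1) ≠ 0 := by
          have := poch_factor_ne _ _ hp2 1 (by omega)
          push_cast at this
          rwa [show 2*a+1+(1:ℂ) = 2*a+1+1 by ring] at this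
        have hv3 : vfn a m (2+1) = wfn a m 0 := by
          unfold vfn
          rw [if_neg (by omega), if_neg (by omega), if_neg (by omega),
            show 2+1-3 = 0 by omega]
        have hv2 : vfn a m 2 = -4*a*(a+1)*((m:ℂ)+1)/(2*a+1) := by
          unfold vfn
          rw [if_neg (by omega), if_neg (by omega), if_pos rfl]
        rw [hv3, hv2]
        unfold Tterm wfn
        rw [show (0:ℕ)+2 = 2 from rfl]
        simp only [poch_two, poch_zero]
        norm_num [Nat.factorial]
        push_cast
        field_simp
        ring
      | (j+3) =>
        have hj : j < m := by omega
        have hp2 : poch (2*a+1) (j+2) ≠ 0 := H (j+2) (by omega)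
        have hp3 : poch (2*a+1) (j+3) ≠ 0 := H (j+3) (by omega)
        have e3 : poch (2*a+1) (j+3) = poch (2*a+1) (j+2) * (2*a+(j:ℂ)+3) := by
          rw [show j+3 = (j+2)+1 from rfl, poch_succ]; push_cast; ring
        have hf : (2*a+(j:ℂ)+3) ≠ 0 := by
          rw [e3] at hp3; exact right_ne_zero_of_mul hp3
        have hFne : (((j+2).factorial : ℂ)) ≠ 0 :=
          Nat.cast_ne_zero.mpr (Nat.factorial_ne_zero _)
        have hjne : ((j:ℂ)+3) ≠ 0 := by
          have h' : ((j:ℂ)+3) = ((j+3 : ℕ) : ℂ) := by push_cast; ring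
          rw [h']; exact Nat.cast_ne_zero.mpr (by omega)
        have h2ne : (2:ℂ)^(j+2) ≠ 0 := pow_ne_zero _ two_ne_zero
        have Em2 : poch (-((m+2:ℕ):ℂ)) (j+3)
            = (-((m:ℂ)+2)) * (-((m:ℂ)+1)) * (poch (-(m:ℂ)) j * (-(m:ℂ)+j)) := by
          rw [show -((m+2:ℕ):ℂ) = -((m:ℂ)+2) by push_cast; ring,
            show j+3 = (j+1)+2 from rfl, poch_down2, poch_succ]
        have Em1 : poch (-((m+1:ℕ):ℂ)) (j+3)
            = -((m:ℂ)+1) * (poch (-(m:ℂ)) j * (-(m:ℂ)+j) * (-(m:ℂ)+j+1)) := by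
          rw [show -((m+1:ℕ):ℂ) = -((m:ℂ)+1) by push_cast; ring,
            show j+3 = (j+2)+1 from rfl, poch_down1, show j+2 = (j+1)+1 from rfl,
            poch_succ, poch_succ]
          push_cast; ring
        have Em0 : poch (-(m:ℂ)) (j+3)
            = poch (-(m:ℂ)) j * (-(m:ℂ)+j) * (-(m:ℂ)+j+1) * (-(m:ℂ)+j+2) := by
          rw [show j+3 = ((j+1)+1)+1 from rfl, poch_succ, poch_succ, poch_succ]
          push_cast; ring
        have Em01 : poch (-(m:ℂ)) (j+1) = poch (-(m:ℂ)) j * (-(m:ℂ)+j) := by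
          rw [poch_succ]
        have Ea : poch a (j+3) = poch a (j+2) * (a+(j:ℂ)+2) := by
          rw [show j+3 = (j+2)+1 from rfl, poch_succ]; push_cast; ring
        have EF : (((j+3).factorial : ℂ)) = ((j+2).factorial : ℂ) * ((j:ℂ)+3) := by
          rw [show j+3 = (j+2)+1 from rfl, Nat.factorial_succ]; push_cast; ring
        have E2p : (2:ℂ)^(j+3) = 2^(j+2)*2 := by
          rw [show j+3 = (j+2)+1 from rfl, pow_succ]
        have hv4 : vfn a m (j+3+1) = wfn a m (j+1) := by
          unfold vfn
          rw [if_neg (by omega), if_neg (by omega), if_neg (by omega),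
            show j+3+1-3 = j+1 by omega]
        have hv3 : vfn a m (j+3) = wfn a m j := by
          unfold vfn
          rw [if_neg (by omega), if_neg (by omega), if_neg (by omega),
            show j+3-3 = j by omega]
        rw [hv4, hv3]
        unfold Tterm wfn
        rw [show j+1+2 = j+3 by omega]
        rw [Em2, Em1, Em0, Em01, Ea, e3, EF, E2p]
        push_cast
        field_simp
        ring
    rw [sum_congr rfl hv, Finset.sum_range_sub]
    have hvf : vfn a m (m+3) = 0 := by
      have h' : vfn a m (m+3) = wfn a m m := by
        unfold vfn
        rw [if_neg (by omega), if_neg (by omega), if_neg (by omega),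
          show m+3-3 = m by omega]
      rw [h']
      simp [wfn]
    rw [hvf]
    simp [vfn]
  have expand : ∑ k ∈ range (m+3),
      ((2*a+(m:ℂ)+2) * Tterm a (m+2) k - Tterm a (m+1) k - ((m:ℂ)+1) * Tterm a m k)
      = (2*a+(m:ℂ)+2) * Ssum a (m+2) - Ssum a (m+1) - ((m:ℂ)+1) * Ssum a m := by
    rw [sum_sub_distrib, sum_sub_distrib, ← mul_sum, ← mul_sum, e1, e0]; rfl
  rw [expand] at key
  linear_combination key

lemma claim (a : ℂ) : ∀ m, (∀ k ≤ m, poch (2*a+1) k ≠ 0) →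
    poch (a+1/2) ((m+1)/2) * Ssum a m = poch (1/2) ((m+1)/2) := by
  intro m
  induction m using Nat.twoStepInduction with
  | zero =>
    intro _
    simp [Ssum, Tterm, poch_zero]
  | one =>
    intro H
    have h1 : (2*a+1) ≠ 0 := by
      have := H 1 (by omega); rwa [poch_one] at this
    rw [show (1+1)/2 = 1 by omega]
    simp only [Ssum, show (1:ℕ)+1 = 0+1+1 from rfl, sum_range_succ, sum_range_zero, Tterm,
      poch_zero, poch_one, pow_zero, pow_one, Nat.factorial_zero, Nat.factorial_one]
    push_cast
    field_simp
    have h1' : (1 + a*2) ≠ 0 := by rwa [add_comm, mul_comm] at h1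
    ring_nf
    field_simp
    ring
  | more n ih1 ih2 =>
    intro H
    have REC := rec_step a n (fun k hk => H k hk)
    have IH1 := ih1 (fun k hk => H k (by omega))
    have IH2 := ih2 (fun k hk => H k (by omega))
    have h2ne : (2*a+(n:ℂ)+2) ≠ 0 := by
      have := poch_factor_ne _ _ (H (n+2) le_rfl) (n+1) (by omega)
      intro hz; apply this; push_cast; linear_combination hz
    rcases Nat.even_or_odd n with ⟨c, hc⟩ | ⟨c, hc⟩
    · -- n = c + c
      subst hc
      rw [show (c+c+1)/2 = c by omega] at IH1
      rw [show (c+c+1+1)/2 = c+1 by omega] at IH2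
      rw [show (c+c+2+1)/2 = c+1 by omega]
      rw [poch_succ, poch_succ] at IH2 ⊢
      apply mul_left_cancel₀ h2ne
      push_cast at REC IH1 IH2 h2ne ⊢
      linear_combination (a+1/2+(c:ℂ)) * poch (a+1/2) c * REC + IH2
        + (2*(c:ℂ)+1) * (a+1/2+(c:ℂ)) * IH1
    · -- n = 2c+1
      subst hc
      rw [show (2*c+1+1)/2 = c+1 by omega] at IH1
      rw [show (2*c+1+1+1)/2 = c+1 by omega] at IH2
      rw [show (2*c+1+2+1)/2 = c+2 by omega]
      rw [show c+2 = (c+1)+1 from rfl]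
      simp only [poch_succ] at IH1 IH2 ⊢
      push_cast at REC IH1 IH2 ⊢
      linear_combination poch (a+1/2) c * (a+1/2+(c:ℂ)) * REC / 2 + IH2 / 2
        + ((c:ℂ)+1) * IH1

theorem twoF1_neg2np1_a_twoAp1 (n : ℕ) (a : ℂ)
    (h : ∀ k ≤ 2 * n + 1, poch (2 * a + 1) k ≠ 0) (ha : 2 * a + 1 ≠ 0) :
    ∑ k ∈ range (2 * n + 2),
        poch (-(2 * n : ℂ) - 1) k * poch a k * 2 ^ k / (poch (2 * a + 1) k * (k.factorial : ℂ))
      = poch (3 / 2) n / ((2 * a + 1) * poch (a + 3 / 2) n) := by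
  have hsum : ∑ k ∈ range (2 * n + 2),
      poch (-(2 * n : ℂ) - 1) k * poch a k * 2 ^ k / (poch (2 * a + 1) k * (k.factorial : ℂ))
      = Ssum a (2*n+1) := by
    rw [Ssum, show 2*n+1+1 = 2*n+2 from rfl]
    apply sum_congr rfl
    intro k _
    rw [Tterm, show -((2*n+1:ℕ):ℂ) = -(2*(n:ℂ))-1 by push_cast; ring]
  have HC := claim a (2*n+1) h
  rw [show (2*n+1+1)/2 = n+1 by omega] at HC
  rw [poch_succ_left, poch_succ_left (1/2)] at HC
  rw [show a+1/2+1 = a+3/2 by ring, show (1:ℂ)/2+1 = 3/2 by norm_num] at HC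
  have hA : poch (a+3/2) n ≠ 0 := by
    rw [poch_prod]
    rw [prod_ne_zero_iff]
    intro i hi
    rw [mem_range] at hi
    have hfac := poch_factor_ne _ _ (h (2*i+3) (by omega)) (2*i+2) (by omega)
    intro hz; apply hfac; push_cast; linear_combination 2*hz
  rw [hsum, eq_div_iff (mul_ne_zero ha hA)]
  linear_combination 2 * HC
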